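/- arXiv:1304.0488 — 3 statements merged into one kernel-verified Lean document; each statement's English description precedes it below -/
import Mathlib

section
/- Let ε ∈ (0,1) and let Ψ : ℕ → [0,1) satisfy Ψ(n) ≤ (φ(n)/n)^{2/ε} for all n. Define ψ₁(n) = Ψ(n) and ψ₂(n) = Ψ(n)^ε · n/φ(n), and θ(n) = ψ₁(n)·ψ₂(n) = Ψ(n)^{1+ε} · n/φ(n). Then for every n with θ(n) ≠ 0 one has max(θ(n)/ψ₁(n), θ(n)/ψ₂(n)) ≤ θ(n)^{ε/(2(1+ε))}. -/
theorem key_max_inequality (ε : ℝ) (hε : ε ∈ Set.Ioo (0:ℝ) 1)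
    (Ψ : ℕ → ℝ) (hΨ : ∀ n, 0 ≤ Ψ n ∧ Ψ n < 1)
    (hbd : ∀ n, Ψ n ≤ ((Nat.totient n : ℝ) / n) ^ (2 / ε))
    (θ : ℕ → ℝ) (hθ : ∀ n, θ n = Ψ n ^ (1 + ε) * n / Nat.totient n) :
    ∀ n, θ n ≠ 0 →
      max (θ n / Ψ n) (θ n / (Ψ n ^ ε * n / Nat.totient n)) ≤ θ n ^ (ε / (2 * (1 + ε))) := by
  obtain ⟨hε0, hε1⟩ := hε
  intro n hn
  obtain ⟨ha0, ha1⟩ := hΨ n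
  set a := Ψ n with ha
  have hθn := hθ n
  have hn0 : n ≠ 0 := by
    rintro rfl
    simp only [Nat.totient_zero, Nat.cast_zero, div_zero] at hθn
    exact hn hθn
  have hφ : 0 < (Nat.totient n : ℝ) := by
    exact_mod_cast Nat.totient_pos.mpr (Nat.pos_of_ne_zero hn0)
  have hnpos : 0 < (n : ℝ) := by exact_mod_cast Nat.pos_of_ne_zero hn0
  have ha0' : 0 < a := by
    rcases ha0.lt_or_eq with h | h
    · exact h
    · exfalso; apply hn; rw [hθn, ← ha, ← h, Real.zero_rpow (by linarith)]; simp
  set r : ℝ := (n : ℝ) / Nat.totient n with hr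
  have hr1 : 1 ≤ r := by
    rw [hr, le_div_iff₀ hφ, one_mul]
    exact_mod_cast Nat.totient_le n
  have hr0 : 0 < r := lt_of_lt_of_le one_pos hr1
  have hθr : θ n = a ^ (1 + ε) * r := by rw [hθn, hr, mul_div_assoc]
  set δ : ℝ := ε / (2 * (1 + ε)) with hδ
  have h1ε : (0:ℝ) < 1 + ε := by linarith
  have hδ0 : 0 < δ := div_pos hε0 (by linarith)
  have hrδ : 1 ≤ r ^ δ := Real.one_le_rpow hr1 hδ0.le
  have hexp : (1 + ε) * δ = ε / 2 := by
    rw [hδ]; field_simp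
  have hpow : θ n ^ δ = a ^ (ε/2) * r ^ δ := by
    rw [hθr, Real.mul_rpow (Real.rpow_nonneg ha0 _) hr0.le,
      ← Real.rpow_mul ha0, hexp]
  -- key bound from hbd
  have hkey : a ^ (ε/2) ≤ r⁻¹ := by
    have h1 : a ≤ r ^ (-(2/ε)) := by
      have hb := hbd n
      rwa [show ((Nat.totient n : ℝ)/n) = r⁻¹ by rw [hr, inv_div],
        Real.inv_rpow hr0.le, ← Real.rpow_neg hr0.le] at hb
    calc a ^ (ε/2) ≤ (r ^ (-(2/ε))) ^ (ε/2) :=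
          Real.rpow_le_rpow ha0 h1 (by positivity)
      _ = r ^ ((-(2/ε)) * (ε/2)) := by rw [← Real.rpow_mul hr0.le]
      _ = r⁻¹ := by
          rw [show (-(2/ε)) * (ε/2) = -1 by field_simp, Real.rpow_neg_one]
  rw [hpow]
  apply max_le
  · -- θ/a = a^ε * r
    have hqa : θ n / a = a ^ ε * r := by
      rw [hθr, Real.rpow_add ha0', Real.rpow_one]
      field_simp
    rw [hqa]
    have e : a ^ ε = a ^ (ε/2) * a ^ (ε/2) := by
      rw [← Real.rpow_add ha0']; ring_nf
    rw [e, mul_assoc]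
    apply mul_le_mul_of_nonneg_left _ (Real.rpow_nonneg ha0 _)
    calc a ^ (ε/2) * r ≤ r⁻¹ * r := mul_le_mul_of_nonneg_right hkey hr0.le
      _ = 1 := inv_mul_cancel₀ hr0.ne'
      _ ≤ r ^ δ := hrδ
  · have haε : 0 < a ^ ε := Real.rpow_pos_of_pos ha0' ε
    have hqa : θ n / (a ^ ε * ↑n / ↑(Nat.totient n)) = a := by
      rw [hθr, hr, Real.rpow_add ha0', Real.rpow_one]
      field_simp
    rw [hqa]
    calc a = a ^ (1:ℝ) := (Real.rpow_one a).symm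
      _ ≤ a ^ (ε/2) := Real.rpow_le_rpow_of_exponent_ge ha0' ha1.le (by linarith)
      _ ≤ a ^ (ε/2) * r ^ δ := le_mul_of_one_le_right (Real.rpow_nonneg ha0 _) hrδ
end

section
/- There exists a function ψ : ℕ → [0,∞) (with ψ(n) ≥ 1 for infinitely many n) and ε > 0 such that Σ_n ψ(n)^{1+ε}·φ(n)/n = ∞ but Σ_n ψ(n)·φ(n)/n < ∞; consequently the Lebesgue measure of W(ψ) is 0 by the first Borel–Cantelli lemma. -/
open MeasureTheory Filter

/-- The Duffin–Schaeffer set `W(ψ)`: points of `[0,1]` approximable with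
coprime pairs `(n,m)` for infinitely many `n`. -/
def DSset (ψ : ℕ → ℝ) : Set ℝ :=
  {x | x ∈ Set.Icc (0:ℝ) 1 ∧
    {n : ℕ | ∃ m : ℤ, Int.gcd (n : ℤ) m = 1 ∧ |x * n - m| < ψ n}.Infinite}

namespace CEaux

open Finset

/-- the `i`-th prime -/
noncomputable def q (i : ℕ) : ℕ := Nat.nth Nat.Prime i

lemma q_prime (i : ℕ) : (q i).Prime := Nat.prime_nth_prime i

lemma q_pos (i : ℕ) : 0 < q i := (q_prime i).pos

lemma q_strictMono : StrictMono q := Nat.nth_strictMono Nat.infinite_setOf_prime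

/-- primorials -/
noncomputable def P (j : ℕ) : ℕ := ∏ i ∈ Finset.range j, q i

lemma P_pos (j : ℕ) : 0 < P j := Finset.prod_pos fun i _ => q_pos i

lemma P_succ (j : ℕ) : P (j + 1) = P j * q j := Finset.prod_range_succ _ _

lemma P_strictMono : StrictMono P := by
  apply strictMono_nat_of_lt_succ
  intro j
  rw [P_succ]
  nlinarith [(q_prime j).two_le, P_pos j]

lemma coprime_P (j : ℕ) : Nat.Coprime (P j) (q j) := by
  apply Nat.Coprime.prod_left
  intro i hi
  exact (Nat.coprime_primes (q_prime i) (q_prime j)).mpr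
    (q_strictMono.injective.ne (Finset.mem_range.mp hi).ne)

lemma totient_P_succ (j : ℕ) :
    Nat.totient (P (j + 1)) = Nat.totient (P j) * (q j - 1) := by
  rw [P_succ, Nat.totient_mul (coprime_P j), Nat.totient_prime (q_prime j)]

/-- the totient ratio of `P j` -/
noncomputable def r (j : ℕ) : ℝ := (Nat.totient (P j) : ℝ) / P j

lemma r_pos (j : ℕ) : 0 < r j :=
  div_pos (by exact_mod_cast (Nat.totient_pos).mpr (P_pos j))
    (by exact_mod_cast P_pos j)

lemma r_zero : r 0 = 1 := by simp [r, P]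

lemma r_succ (j : ℕ) : r (j + 1) = r j * (((q j : ℝ) - 1) / q j) := by
  have hq : (1 : ℝ) ≤ (q j : ℝ) := by exact_mod_cast (q_pos j)
  have hq0 : (q j : ℝ) ≠ 0 := by positivity
  have hP0 : (P j : ℝ) ≠ 0 := by exact_mod_cast (P_pos j).ne'
  rw [r, totient_P_succ, P_succ]
  push_cast [Nat.cast_sub (q_pos j)]
  rw [r]
  field_simp

lemma r_antitone : Antitone r := by
  apply antitone_nat_of_succ_le
  intro j
  rw [r_succ]
  have h1 : ((q j : ℝ) - 1) / q j ≤ 1 := by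
    have : (0:ℝ) < q j := by exact_mod_cast q_pos j
    rw [div_le_one this]; linarith
  nlinarith [r_pos j, r_pos (j+1)]

/-- partial sums of prime reciprocals -/
noncomputable def S (j : ℕ) : ℝ := ∑ i ∈ Finset.range j, (1 : ℝ) / q i

lemma not_summable_q : ¬ Summable (fun i : ℕ => (1 : ℝ) / q i) := by
  intro h
  apply Nat.Primes.not_summable_one_div
  have hbij : Function.Bijective (fun i => (⟨q i, q_prime i⟩ : Nat.Primes)) := by
    constructor
    · intro a b hab
      exact q_strictMono.injective (congrArg Subtype.val hab)
    · rintro ⟨p, hp⟩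
      exact ⟨Nat.count Nat.Prime p, Subtype.ext (Nat.nth_count hp)⟩
  let e : ℕ ≃ Nat.Primes := Equiv.ofBijective _ hbij
  have : (fun p : Nat.Primes => (1 / p : ℝ)) = (fun i : ℕ => (1 : ℝ) / q i) ∘ e.symm := by
    funext p
    simp only [Function.comp_apply]
    have : q (e.symm p) = p := congrArg Subtype.val (e.apply_symm_apply p)
    rw [this]
  rw [this]
  exact h.comp_injective e.symm.injective

lemma S_tendsto : Tendsto S atTop atTop := by
  have := (not_summable_iff_tendsto_nat_atTop_of_nonneg
    (f := fun i : ℕ => (1 : ℝ) / q i) (fun i => by positivity)).mp not_summable_q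
  exact this

lemma r_le_exp (j : ℕ) : r j ≤ Real.exp (-S j) := by
  induction j with
  | zero => simp [r_zero, S]
  | succ j ih =>
    rw [r_succ]
    have hq : (0:ℝ) < q j := by exact_mod_cast q_pos j
    have h1 : ((q j : ℝ) - 1) / q j ≤ Real.exp (-(1 / q j)) := by
      have := Real.add_one_le_exp (-(1 / (q j : ℝ)))
      have h2 : ((q j : ℝ) - 1) / q j = -(1 / q j) + 1 := by field_simp; ring
      linarith [h2 ▸ this]
    have hfac : (0:ℝ) ≤ ((q j : ℝ) - 1) / q j := by
      apply div_nonneg _ hq.le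
      have : (1:ℝ) ≤ q j := by exact_mod_cast q_pos j
      linarith
    calc r j * (((q j : ℝ) - 1) / q j)
        ≤ Real.exp (-S j) * Real.exp (-(1 / q j)) := by
          apply mul_le_mul ih h1 hfac (Real.exp_nonneg _)
      _ = Real.exp (-S (j + 1)) := by
          rw [← Real.exp_add]
          congr 1
          simp [S, Finset.sum_range_succ]
          ring

lemma r_tendsto : Tendsto r atTop (nhds 0) := by
  apply squeeze_zero (fun j => (r_pos j).le) r_le_exp
  exact Real.tendsto_exp_atBot.comp (tendsto_neg_atBot_iff.mpr S_tendsto)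

lemma exists_r_lt {c : ℝ} (hc : 0 < c) : ∃ j, r j < c :=
  (r_tendsto.eventually_lt_const hc).exists

/-- thresholds -/
noncomputable def c (k : ℕ) : ℝ := 1 / ((k : ℝ) + 1) ^ 3

lemma c_pos (k : ℕ) : 0 < c k := by unfold c; positivity

lemma c_antitone : Antitone c := by
  intro a b hab
  have hab' : (a:ℝ) ≤ (b:ℝ) := by exact_mod_cast hab
  have h1 : (0:ℝ) < ((a:ℝ)+1)^3 := by positivity
  have h2 : ((a:ℝ)+1)^3 ≤ ((b:ℝ)+1)^3 := by
    gcongr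
  exact one_div_le_one_div_of_le h1 h2

lemma c_le_one (k : ℕ) : c k ≤ 1 := by
  have hk : (0:ℝ) ≤ (k:ℝ) := Nat.cast_nonneg k
  rw [c, div_le_one (by positivity)]
  have h3 : ((k:ℝ)+1)^3 = (k:ℝ)^3+3*(k:ℝ)^2+3*(k:ℝ)+1 := by ring
  nlinarith [pow_nonneg hk 3, pow_nonneg hk 2]

noncomputable def h (k : ℕ) : ℕ := sInf {j | r j < c k}

lemma h_spec (k : ℕ) : r (h k) < c k := Nat.sInf_mem (exists_r_lt (c_pos k))

lemma h_mono : Monotone h := by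
  intro a b hab
  exact Nat.sInf_le (lt_of_lt_of_le (h_spec b) (c_antitone hab))

noncomputable def g (k : ℕ) : ℕ := h k + k

lemma g_strictMono : StrictMono g := by
  intro a b hab
  have := h_mono hab.le
  simp only [g]
  omega

lemma r_g_lt (k : ℕ) : r (g k) < c k :=
  lt_of_le_of_lt (r_antitone (Nat.le_add_right _ _)) (h_spec k)

/-- the support sequence -/
noncomputable def N (k : ℕ) : ℕ := P (g k)

lemma N_strictMono : StrictMono N := P_strictMono.comp g_strictMono

lemma N_inj : Function.Injective N := N_strictMono.injective

lemma g_pos (k : ℕ) : 1 ≤ g k := by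
  rcases Nat.eq_zero_or_pos k with hk | hk
  · subst hk
    simp only [g]
    rcases Nat.eq_zero_or_pos (h 0) with h0 | h0
    · exfalso
      have := h_spec 0
      rw [h0, r_zero] at this
      have := c_le_one 0
      linarith
    · omega
  · simp only [g]; omega

lemma two_le_N (k : ℕ) : 2 ≤ N k := by
  have : P 1 ≤ P (g k) := P_strictMono.monotone (g_pos k)
  have hP1 : P 1 = 2 := by
    simp [P, Finset.prod_range_one, q, Nat.nth_prime_zero_eq_two]
  rw [N]; omega

/-- totient ratio along the support -/
noncomputable def a (k : ℕ) : ℝ := (Nat.totient (N k) : ℝ) / N k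

lemma a_eq (k : ℕ) : a k = r (g k) := rfl

lemma a_pos (k : ℕ) : 0 < a k := r_pos (g k)

lemma a_lt (k : ℕ) : a k < c k := r_g_lt k

/-- the values of ψ on the support -/
noncomputable def t (k : ℕ) : ℝ := Real.sqrt (1 / (((k : ℝ) + 1) * a k))

lemma t_nonneg (k : ℕ) : 0 ≤ t k := Real.sqrt_nonneg _

lemma arg_pos (k : ℕ) : 0 < 1 / (((k : ℝ) + 1) * a k) := by
  have := a_pos k
  positivity

lemma t_sq (k : ℕ) : t k ^ 2 = 1 / (((k : ℝ) + 1) * a k) :=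
  Real.sq_sqrt (arg_pos k).le

lemma ka_le_one (k : ℕ) : ((k : ℝ) + 1) * a k ≤ 1 := by
  have h1 : ((k : ℝ) + 1) * a k ≤ ((k : ℝ) + 1) * c k := by
    have := (a_lt k).le
    gcongr
  have h2 : ((k : ℝ) + 1) * c k ≤ 1 := by
    have hk : (0:ℝ) ≤ (k:ℝ) := Nat.cast_nonneg k
    rw [c, mul_one_div, div_le_one (by positivity)]
    have h3 : ((k:ℝ)+1)^3 = (k:ℝ)^3+3*(k:ℝ)^2+3*(k:ℝ)+1 := by ring
    nlinarith [pow_nonneg hk 3, pow_nonneg hk 2]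
  linarith

lemma one_le_t (k : ℕ) : 1 ≤ t k := by
  rw [t, show (1:ℝ) = Real.sqrt 1 by simp]
  apply Real.sqrt_le_sqrt
  rw [le_div_iff₀ (mul_pos (by positivity) (a_pos k))]
  simpa using ka_le_one k

lemma t_mul_a_le (k : ℕ) : t k * a k ≤ 1 / ((k : ℝ) + 1) ^ 2 := by
  have ha := a_pos k
  have h1 : t k * a k = Real.sqrt ((1 / (((k : ℝ) + 1) * a k)) * a k ^ 2) := by
    rw [Real.sqrt_mul (arg_pos k).le, Real.sqrt_sq ha.le, t]
  have h2 : (1 / (((k : ℝ) + 1) * a k)) * a k ^ 2 = a k / ((k : ℝ) + 1) := by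
    field_simp
  rw [h1, h2]
  rw [show (1:ℝ) / ((k : ℝ) + 1) ^ 2 = Real.sqrt ((1 / ((k : ℝ) + 1) ^ 2) ^ 2) from
    (Real.sqrt_sq (by positivity)).symm]
  apply Real.sqrt_le_sqrt
  have := (a_lt k).le
  calc a k / ((k : ℝ) + 1) ≤ c k / ((k : ℝ) + 1) := by gcongr
    _ = (1 / ((k : ℝ) + 1) ^ 2) ^ 2 := by rw [c]; field_simp

lemma F_pos (k : ℕ) : 0 < Nat.totient (N k) :=
  Nat.totient_pos.mpr (by have := two_le_N k; omega)

lemma t_le_N (k : ℕ) : t k ≤ (N k : ℝ) := by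
  have hN : (2:ℝ) ≤ (N k : ℝ) := by exact_mod_cast two_le_N k
  have hF : (1:ℝ) ≤ (Nat.totient (N k) : ℝ) := by exact_mod_cast F_pos k
  have ha := a_pos k
  rw [t, Real.sqrt_le_left (by linarith)]
  have h2 : (1:ℝ) / (N k) ≤ a k := by
    rw [a]; gcongr
  have h1 : (1:ℝ) / (N k) ≤ ((k : ℝ) + 1) * a k := by nlinarith
  calc 1 / (((k : ℝ) + 1) * a k) ≤ 1 / ((1:ℝ) / (N k)) := by
        gcongr
    _ = (N k : ℝ) := one_div_one_div _
    _ ≤ (N k : ℝ) ^ 2 := by nlinarith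

/-- the function ψ -/
noncomputable def ψ : ℕ → ℝ := Function.extend N t (fun _ => 0)

lemma ψ_N (k : ℕ) : ψ (N k) = t k := N_inj.extend_apply _ _ _

lemma ψ_zero {n : ℕ} (hn : n ∉ Set.range N) : ψ n = 0 :=
  Function.extend_apply' _ _ _ (by simpa [Set.range] using hn)

lemma ψ_nonneg (n : ℕ) : 0 ≤ ψ n := by
  by_cases hn : n ∈ Set.range N
  · obtain ⟨k, rfl⟩ := hn
    rw [ψ_N]; exact t_nonneg k
  · rw [ψ_zero hn]

/-! ### Counting coprime integers in blocks -/

lemma card_coprime_block (n : ℕ) (A : ℤ) (hA : (n : ℤ) ∣ A) :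
    ((Finset.Ico A (A + n)).filter (fun m : ℤ => Int.gcd (n : ℤ) m = 1)).card
      ≤ n.totient := by
  obtain ⟨j, rfl⟩ := hA
  rw [Nat.totient_eq_card_coprime]
  apply Finset.card_le_card_of_injOn (fun m => (m - n * j).toNat)
  · intro m hm
    simp only [Finset.mem_coe, Finset.mem_filter, Finset.mem_Ico] at hm
    obtain ⟨⟨h1, h2⟩, h3⟩ := hm
    have h0 : (0 : ℤ) ≤ m - n * j := by omega
    simp only [Finset.mem_coe, Finset.mem_filter, Finset.mem_range]
    constructor
    · omega
    · have e1 : ((m - n * j).toNat : ℤ) = m - n * j := Int.toNat_of_nonneg h0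
      have hcop : IsCoprime ((n : ℤ)) (m - (n : ℤ) * j) := by
        have : IsCoprime ((n : ℤ)) m := Int.isCoprime_iff_gcd_eq_one.mpr h3
        have h4 := this.add_mul_left_right (-j)
        have h5 : m + (n : ℤ) * (-j) = m - (n : ℤ) * j := by ring
        rwa [h5] at h4
      have := Int.isCoprime_iff_gcd_eq_one.mp hcop
      unfold Nat.Coprime
      rw [← Int.gcd_natCast_natCast, e1]
      exact this
  · intro m1 hm1 m2 hm2 hrep
    simp only [Finset.coe_filter, Set.mem_setOf_eq, Finset.mem_Ico] at hm1 hm2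
    simp only at hrep
    omega

/-- the finite sets of relevant numerators -/
noncomputable def B (k : ℕ) : Finset ℤ :=
  (Finset.Ico (-(N k : ℤ)) (2 * (N k : ℤ))).filter
    (fun m : ℤ => Int.gcd ((N k : ℤ)) m = 1)

lemma card_B_le (k : ℕ) : (B k).card ≤ 3 * Nat.totient (N k) := by
  have hn : (0 : ℤ) ≤ (N k : ℤ) := by positivity
  have e1 : Finset.Ico ((0:ℤ)) ((N k : ℤ)) ∪ Finset.Ico ((N k : ℤ)) (2 * (N k : ℤ)) =
      Finset.Ico (0:ℤ) (2 * (N k : ℤ)) :=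
    Finset.Ico_union_Ico_eq_Ico (by omega) (by omega)
  have e2 : Finset.Ico (-(N k : ℤ)) 0 ∪ Finset.Ico (0:ℤ) (2 * (N k : ℤ)) =
      Finset.Ico (-(N k : ℤ)) (2 * (N k : ℤ)) :=
    Finset.Ico_union_Ico_eq_Ico (by omega) (by omega)
  have hb0 := card_coprime_block (N k) (-(N k : ℤ)) ⟨-1, by ring⟩
  have hb1 := card_coprime_block (N k) 0 ⟨0, by ring⟩
  have hb2 := card_coprime_block (N k) ((N k : ℤ)) ⟨1, by ring⟩
  rw [show -(N k : ℤ) + (N k : ℤ) = 0 by ring] at hb0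
  rw [show (0 : ℤ) + (N k : ℤ) = (N k : ℤ) by ring] at hb1
  rw [show ((N k : ℤ)) + (N k : ℤ) = 2 * (N k : ℤ) by ring] at hb2
  have step : (B k).card ≤
      ((Finset.Ico (-(N k : ℤ)) 0).filter (fun m : ℤ => Int.gcd ((N k : ℤ)) m = 1)).card +
      (((Finset.Ico ((0:ℤ)) ((N k : ℤ))).filter (fun m : ℤ => Int.gcd ((N k : ℤ)) m = 1)).card +
       ((Finset.Ico ((N k : ℤ)) (2 * (N k : ℤ))).filter
          (fun m : ℤ => Int.gcd ((N k : ℤ)) m = 1)).card) := by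
    rw [B, ← e2, ← e1, Finset.filter_union, Finset.filter_union]
    exact le_trans (Finset.card_union_le _ _)
      (by gcongr; exact Finset.card_union_le _ _)
  omega

/-! ### The approximation sets -/

/-- the sets whose limsup contains `DSset ψ` -/
def A (n : ℕ) : Set ℝ :=
  {x | x ∈ Set.Icc (0:ℝ) 1 ∧ ∃ m : ℤ, Int.gcd (n : ℤ) m = 1 ∧ |x * n - m| < ψ n}

lemma A_empty {n : ℕ} (hn : n ∉ Set.range N) : A n = ∅ := by
  ext x
  simp only [A, Set.mem_setOf_eq, Set.mem_empty_iff_false, iff_false, not_and]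
  rintro hx ⟨m, hm, habs⟩
  rw [ψ_zero hn] at habs
  exact absurd habs (not_lt.mpr (abs_nonneg _))

lemma A_subset (k : ℕ) :
    A (N k) ⊆ ⋃ m ∈ B k, Set.Ioo (((m : ℝ) - t k) / N k) (((m : ℝ) + t k) / N k) := by
  rintro x ⟨hx, m, hgcd, habs⟩
  rw [ψ_N] at habs
  obtain ⟨hx0, hx1⟩ := hx
  have hN : (0:ℝ) < (N k : ℝ) := by
    have := two_le_N k
    exact_mod_cast by omega
  have htN := t_le_N k
  have ht0 : 0 ≤ t k := t_nonneg k
  rw [abs_lt] at habs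
  obtain ⟨hlo, hhi⟩ := habs
  have hxN0 : 0 ≤ x * N k := by positivity
  have hxN1 : x * N k ≤ N k := by nlinarith
  have hm_lt : (m : ℝ) < 2 * N k := by nlinarith
  have hm_gt : -(N k : ℝ) < (m : ℝ) := by nlinarith
  have hmem : m ∈ B k := by
    rw [B, Finset.mem_filter, Finset.mem_Ico]
    refine ⟨⟨?_, ?_⟩, hgcd⟩
    · exact_mod_cast hm_gt.le
    · exact_mod_cast hm_lt
  apply Set.mem_biUnion hmem
  rw [Set.mem_Ioo, div_lt_iff₀ hN, lt_div_iff₀ hN]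
  constructor <;> nlinarith

lemma vol_A_le (k : ℕ) :
    volume (A (N k)) ≤ ENNReal.ofReal (6 / ((k : ℝ) + 1) ^ 2) := by
  have hN : (0:ℝ) < (N k : ℝ) := by
    have := two_le_N k
    exact_mod_cast by omega
  have ht0 : 0 ≤ t k := t_nonneg k
  calc volume (A (N k))
      ≤ volume (⋃ m ∈ B k, Set.Ioo (((m : ℝ) - t k) / N k) (((m : ℝ) + t k) / N k)) :=
        measure_mono (A_subset k)
    _ ≤ ∑ m ∈ B k, volume (Set.Ioo (((m : ℝ) - t k) / N k) (((m : ℝ) + t k) / N k)) :=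
        measure_biUnion_finset_le _ _
    _ = ∑ m ∈ B k, ENNReal.ofReal (2 * t k / N k) := by
        apply Finset.sum_congr rfl
        intro m _
        rw [Real.volume_Ioo]
        congr 1
        field_simp
        ring
    _ = (B k).card * ENNReal.ofReal (2 * t k / N k) := by
        rw [Finset.sum_const, nsmul_eq_mul]
    _ ≤ ((3 * Nat.totient (N k) : ℕ) : ENNReal) * ENNReal.ofReal (2 * t k / N k) := by
        gcongr
        exact_mod_cast card_B_le k
    _ = ENNReal.ofReal (((3 * Nat.totient (N k) : ℕ) : ℝ) * (2 * t k / N k)) := by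
        rw [ENNReal.ofReal_mul (by positivity), ENNReal.ofReal_natCast]
    _ ≤ ENNReal.ofReal (6 / ((k : ℝ) + 1) ^ 2) := by
        apply ENNReal.ofReal_le_ofReal
        have key : ((3 * Nat.totient (N k) : ℕ) : ℝ) * (2 * t k / N k) = 6 * (t k * a k) := by
          rw [a]
          push_cast
          field_simp
          ring
        rw [key]
        have := t_mul_a_le k
        have h6 : 6 * (t k * a k) ≤ 6 * (1 / ((k : ℝ) + 1) ^ 2) := by linarith
        calc 6 * (t k * a k) ≤ 6 * (1 / ((k : ℝ) + 1) ^ 2) := h6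
          _ = 6 / ((k : ℝ) + 1) ^ 2 := by ring

lemma summable_inv_sq : Summable (fun k : ℕ => 1 / ((k : ℝ) + 1) ^ 2) := by
  have h : Summable (fun n : ℕ => 1 / (n : ℝ) ^ 2) :=
    Real.summable_one_div_nat_pow.mpr one_lt_two
  have h2 := (summable_nat_add_iff 1).mpr h
  convert h2 using 2 with k
  · rfl
  push_cast
  ring_nf

lemma not_summable_shift :
    ¬ Summable (fun k : ℕ => 1 / ((k : ℝ) + 1)) := by
  intro hs
  apply Real.not_summable_one_div_natCast
  apply (summable_nat_add_iff 1).mp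
  convert hs using 2 with k
  · rfl
  push_cast
  ring_nf

lemma summable_main : Summable (fun n : ℕ => ψ n * (Nat.totient n / n : ℝ)) := by
  rw [← Function.Injective.summable_iff N_inj
    (f := fun n : ℕ => ψ n * (Nat.totient n / n : ℝ))
    (fun n hn => by show ψ n * _ = 0; rw [ψ_zero hn, zero_mul])]
  refine Summable.of_nonneg_of_le (fun k => ?_) (fun k => ?_) summable_inv_sq
  · simp only [Function.comp_apply, ψ_N]
    have h1 := t_nonneg k
    have h2 : (0:ℝ) ≤ (Nat.totient (N (k:ℕ)) : ℝ) / (N k : ℝ) := by positivity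
    exact mul_nonneg h1 h2
  · simp only [Function.comp_apply, ψ_N]
    exact t_mul_a_le k

lemma not_summable_main :
    ¬ Summable (fun n : ℕ => ψ n ^ (1 + (1:ℝ)) * (Nat.totient n / n : ℝ)) := by
  intro hs
  apply not_summable_shift
  have h2 := hs.comp_injective N_inj
  have h3 : ((fun n : ℕ => ψ n ^ (1 + (1:ℝ)) * (Nat.totient n / n : ℝ)) ∘ N) =
      fun k : ℕ => 1 / ((k : ℝ) + 1) := by
    funext k
    simp only [Function.comp_apply, ψ_N]
    have he : (1 : ℝ) + 1 = ((2 : ℕ) : ℝ) := by norm_num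
    rw [he, Real.rpow_natCast]
    have hta := t_sq k
    have ha := a_pos k
    have hk1 : (0:ℝ) < (k : ℝ) + 1 := by positivity
    show t k ^ 2 * a k = 1 / ((k : ℝ) + 1)
    rw [hta]
    field_simp
  rw [h3] at h2
  exact h2

lemma vol_DSset : volume (DSset ψ) = 0 := by
  have hsub : DSset ψ ⊆ limsup A atTop := by
    rintro x ⟨hx, hinf⟩
    rw [mem_limsup_iff_frequently_mem]
    rw [← Nat.frequently_atTop_iff_infinite] at hinf
    exact hinf.mono fun n hn => ⟨hx, hn⟩
  have hsum : (∑' n, volume (A n)) ≠ ⊤ := by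
    have he : (∑' k, volume (A (N k))) = ∑' n, volume (A n) := by
      refine Function.Injective.tsum_eq N_inj (f := fun n => volume (A n)) ?_
      intro n hn
      by_contra hcon
      rw [Function.mem_support, A_empty hcon, measure_empty] at hn
      exact hn rfl
    rw [← he]
    have hle : (∑' k, volume (A (N k))) ≤ ∑' (k : ℕ), ENNReal.ofReal (6 / ((k : ℝ) + 1) ^ 2) :=
      ENNReal.tsum_le_tsum vol_A_le
    have hsum2 : Summable (fun k : ℕ => 6 / ((k : ℝ) + 1) ^ 2) := by
      have := summable_inv_sq.mul_left 6
      convert this using 2 with k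
      · rfl
      ring
    have hfin : (∑' (k : ℕ), ENNReal.ofReal (6 / ((k : ℝ) + 1) ^ 2)) ≠ ⊤ := by
      rw [← ENNReal.ofReal_tsum_of_nonneg (fun k => by positivity) hsum2]
      exact ENNReal.ofReal_ne_top
    exact ne_top_of_le_ne_top hfin hle
  exact measure_mono_null hsub (measure_limsup_atTop_eq_zero hsum)

lemma infinite_one_le : {n : ℕ | 1 ≤ ψ n}.Infinite := by
  apply (Set.infinite_range_of_injective N_inj).mono
  rintro _ ⟨k, rfl⟩
  rw [Set.mem_setOf_eq, ψ_N]
  exact one_le_t k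

end CEaux

theorem counterexample_unbounded_psi :
    ∃ ψ : ℕ → ℝ, (∀ n, 0 ≤ ψ n) ∧ {n : ℕ | 1 ≤ ψ n}.Infinite ∧
      ∃ ε > (0:ℝ),
        ¬ Summable (fun n : ℕ => ψ n ^ (1 + ε) * (Nat.totient n / n : ℝ)) ∧
        Summable (fun n : ℕ => ψ n * (Nat.totient n / n : ℝ)) ∧
        volume (DSset ψ) = 0 :=
  ⟨CEaux.ψ, CEaux.ψ_nonneg, CEaux.infinite_one_le, 1, one_pos,
    CEaux.not_summable_main, CEaux.summable_main, CEaux.vol_DSset⟩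
end

section
/- The set {φ(n)/n : n ∈ ℕ} is dense in the interval (0,1), where φ is Euler's totient function. -/
open Finset Filter Real

private lemma totient_ratio_prod (s : Finset ℕ) (hs : ∀ p ∈ s, p.Prime) :
    ((Nat.totient (∏ p ∈ s, p) : ℝ) / (∏ p ∈ s, p)) = ∏ p ∈ s, (1 - (p : ℝ)⁻¹) := by
  set n := ∏ p ∈ s, p with hn
  have hpf : n.primeFactors = s := Nat.primeFactors_prod hs
  have hq : (Nat.totient n : ℚ) = n * ∏ p ∈ n.primeFactors, (1 - (p : ℚ)⁻¹) :=
    Nat.totient_eq_mul_prod_factors n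
  have hr : (Nat.totient n : ℝ) = n * ∏ p ∈ n.primeFactors, (1 - (p : ℝ)⁻¹) := by
    have := congrArg (fun q : ℚ => (q : ℝ)) hq
    push_cast at this ⊢
    exact this
  have hn0 : (n : ℝ) ≠ 0 := by
    have : 0 < n := Finset.prod_pos fun p hp => (hs p hp).pos
    exact_mod_cast this.ne'
  rw [hr, hpf]
  field_simp

theorem totient_ratio_dense :
    Set.Ioo (0:ℝ) 1 ⊆ closure {x : ℝ | ∃ n : ℕ, 0 < n ∧ (Nat.totient n : ℝ) / n = x} := by
  intro x hx
  obtain ⟨hx0, hx1⟩ := hx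
  rw [Metric.mem_closure_iff]
  intro ε hε
  -- choose a large threshold P
  obtain ⟨P, hPgt⟩ := exists_nat_gt (max 2 ε⁻¹)
  have hP2 : (2:ℝ) ≤ P := le_of_lt (lt_of_le_of_lt (le_max_left _ _) hPgt)
  have hP0 : (0:ℝ) < P := lt_of_lt_of_le (by norm_num) hP2
  have hPε : (P:ℝ)⁻¹ < ε := by
    rw [inv_lt_comm₀ hP0 hε]
    exact lt_of_le_of_lt (le_max_right _ _) hPgt
  set S : ℕ → Finset ℕ := fun N => (Finset.range N).filter (fun p => p.Prime ∧ P ≤ (p:ℝ))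
    with hS
  set f : ℕ → ℝ := fun N => ∏ p ∈ S N, (1 - (p : ℝ)⁻¹) with hf
  have hSprime : ∀ N, ∀ p ∈ S N, p.Prime := fun N p hp => (Finset.mem_filter.mp hp).2.1
  have hfactor_nonneg : ∀ N, ∀ p ∈ S N, (0:ℝ) ≤ 1 - (p:ℝ)⁻¹ := by
    intro N p hp
    have h2 : (2:ℝ) ≤ p := by exact_mod_cast (hSprime N p hp).two_le
    have : (p:ℝ)⁻¹ ≤ 1 := by
      rw [inv_le_one_iff₀]; right; linarith
    linarith
  -- divergence of sum of reciprocals of primes ≥ P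
  set g : ℕ → ℝ := Set.indicator {p : ℕ | p.Prime ∧ P ≤ (p:ℝ)} (fun n => 1 / n) with hg
  have hgnonneg : ∀ n, 0 ≤ g n := by
    intro n
    apply Set.indicator_nonneg
    intro a _
    positivity
  have hgsum : ∀ N, ∑ i ∈ Finset.range N, g i = ∑ p ∈ S N, 1 / (p:ℝ) := by
    intro N
    rw [hS, hg]
    simp only [Set.indicator_apply, Set.mem_setOf_eq]
    rw [Finset.sum_filter]
  have hnotsum : ¬ Summable g := by
    intro hsg
    apply not_summable_one_div_on_primes
    have heq : Set.indicator {p : ℕ | p.Prime} (fun n : ℕ => (1:ℝ) / n)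
        = g + Set.indicator {p : ℕ | p.Prime ∧ (p:ℝ) < P} (fun n : ℕ => (1:ℝ) / n) := by
      funext n
      simp only [Pi.add_apply, Set.indicator_apply, Set.mem_setOf_eq, hg]
      by_cases hp : n.Prime
      · by_cases hP : P ≤ (n:ℝ)
        · simp [hp, hP, not_lt.mpr hP]
        · simp [hp, hP, not_le.mp hP]
      · simp [hp]
    rw [heq]
    apply hsg.add
    apply summable_of_ne_finset_zero (s := Finset.range P)
    intro n hn
    have hn' : P ≤ n := not_lt.mp (fun h => hn (Finset.mem_range.mpr h))
    have hnP : ¬ ((n:ℝ) < P) := not_lt.mpr (by exact_mod_cast hn')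
    simp only [Set.indicator_apply, Set.mem_setOf_eq]
    rw [if_neg]
    rintro ⟨-, hlt⟩
    exact hnP hlt
  have hdiv : Tendsto (fun N => ∑ i ∈ Finset.range N, g i) atTop atTop :=
    (not_summable_iff_tendsto_nat_atTop_of_nonneg hgnonneg).mp hnotsum
  -- ∃ N, f N < x
  have hflt : ∃ N, f N < x := by
    obtain ⟨N, hN⟩ := (hdiv.eventually_ge_atTop (-Real.log x + 1)).exists
    refine ⟨N, ?_⟩
    have hle : f N ≤ Real.exp (-(∑ p ∈ S N, 1 / (p:ℝ))) := by
      rw [← Finset.sum_neg_distrib, Real.exp_sum]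
      apply Finset.prod_le_prod (hfactor_nonneg N)
      intro p hp
      have := Real.add_one_le_exp (-(1/(p:ℝ)))
      have h1p : (1:ℝ)/p = (p:ℝ)⁻¹ := one_div _
      linarith [this]
    have hsum : -Real.log x + 1 ≤ ∑ p ∈ S N, 1 / (p:ℝ) := by rw [← hgsum]; exact hN
    calc f N ≤ Real.exp (-(∑ p ∈ S N, 1 / (p:ℝ))) := hle
      _ ≤ Real.exp (Real.log x - 1) := by
          apply Real.exp_le_exp.mpr; linarith
      _ < Real.exp (Real.log x) := Real.exp_lt_exp.mpr (by linarith)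
      _ = x := Real.exp_log hx0
  -- minimal such N
  set N₀ := Nat.find hflt with hN₀
  have hspec : f N₀ < x := Nat.find_spec hflt
  have hN₀pos : N₀ ≠ 0 := by
    intro h
    rw [h] at hspec
    have : f 0 = 1 := by simp [hf, hS]
    rw [this] at hspec
    linarith
  obtain ⟨M, hM⟩ : ∃ M, N₀ = M + 1 := ⟨N₀ - 1, (Nat.succ_pred_eq_of_pos (Nat.pos_of_ne_zero hN₀pos)).symm⟩
  have hMge : x ≤ f M := by
    have := Nat.find_min hflt (m := M) (by omega)
    linarith [not_lt.mp this]
  -- the step from M to M+1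
  have hstep : x - ε < f N₀ := by
    by_cases hcase : M.Prime ∧ P ≤ (M:ℝ)
    · have hMnot : M ∉ S M := fun h => absurd (Finset.mem_range.mp (Finset.mem_filter.mp h).1) (lt_irrefl M)
      have hSsucc : S (M+1) = insert M (S M) := by
        simp only [hS, Finset.range_add_one, Finset.filter_insert, if_pos hcase]
      have hfsucc : f (M+1) = (1 - (M:ℝ)⁻¹) * f M := by
        simp only [hf, hSsucc]
        rw [Finset.prod_insert hMnot]
      have hMP : (P:ℝ) ≤ M := hcase.2
      have hMinv : (M:ℝ)⁻¹ ≤ (P:ℝ)⁻¹ := by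
        apply inv_anti₀ hP0 hMP
      have hfM1 : f M ≤ 1 := by
        apply Finset.prod_le_one (hfactor_nonneg M)
        intro p hp
        have : (0:ℝ) < p := by exact_mod_cast (hSprime M p hp).pos
        have : (0:ℝ) ≤ (p:ℝ)⁻¹ := by positivity
        linarith
      have hfM0 : 0 ≤ f M := Finset.prod_nonneg (hfactor_nonneg M)
      rw [hM, hfsucc]
      have h1 : (1 - (P:ℝ)⁻¹) * x ≤ (1 - (M:ℝ)⁻¹) * f M := by
        apply mul_le_mul _ hMge (le_of_lt hx0) _
        · linarith
        · have : (0:ℝ) < M := lt_of_lt_of_le hP0 hMP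
          have : (M:ℝ)⁻¹ ≤ 1 := by
            rw [inv_le_one_iff₀]; right; linarith [hP2, hMP]
          linarith
      have h2 : x - ε < (1 - (P:ℝ)⁻¹) * x := by
        have : (P:ℝ)⁻¹ * x ≤ (P:ℝ)⁻¹ * 1 := by
          apply mul_le_mul_of_nonneg_left (le_of_lt hx1) (by positivity)
        nlinarith
      linarith
    · have hSsucc : S (M+1) = S M := by
        simp only [hS, Finset.range_add_one, Finset.filter_insert, if_neg hcase]
      have : f (M+1) = f M := by simp only [hf, hSsucc]
      rw [hM, this]
      linarith [hMge, hε]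
  -- conclusion
  refine ⟨f N₀, ⟨∏ p ∈ S N₀, p, ?_, ?_⟩, ?_⟩
  · exact Finset.prod_pos fun p hp => (hSprime N₀ p hp).pos
  · exact totient_ratio_prod (S N₀) (hSprime N₀)
  · rw [Real.dist_eq, abs_sub_lt_iff]
    constructor <;> linarith
end
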